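/- Let η : ℝ → ℝ be three times continuously differentiable with η'(x) > 0 for all x. Define g(x) = (η'(x))^{−1/2}, f(x) = η(x)·(η'(x))^{−1/2}, and u(x) = (1/2)·S(η)(x). Then f and g are twice differentiable solutions of Hill's equation y'' + u·y = 0 (i.e. f'' + u·f = 0 and g'' + u·g = 0 pointwise), and their Wronskian satisfies f(x)g'(x) − f'(x)g(x) = −1 for all x. (This reconstructs a pair of solutions of Hill's equation from the ratio η.) -/

import Mathlib

open Real

/-- The Schwarzian derivative `S(η) = η'''/η' − (3/2)·(η''/η')²`. -/
noncomputable def schwarzian (η : ℝ → ℝ) (x : ℝ) : ℝ :=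
  iteratedDeriv 3 η x / deriv η x - (3 / 2) * (iteratedDeriv 2 η x / deriv η x) ^ 2

/-- From a ratio `η` with `η' > 0` one reconstructs solutions
`g = (η')^{-1/2}` and `f = η·(η')^{-1/2}` of Hill's equation
`y'' + u·y = 0` with potential `u = (1/2)·S(η)`, with Wronskian
`f g' − f' g = −1`. -/
theorem hill_solutions_from_ratio
    (η : ℝ → ℝ) (hη : ContDiff ℝ 3 η) (hpos : ∀ x : ℝ, 0 < deriv η x) :
    (∀ x : ℝ, iteratedDeriv 2 (fun y => η y / Real.sqrt (deriv η y)) x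
        + (1 / 2) * schwarzian η x * (η x / Real.sqrt (deriv η x)) = 0) ∧
    (∀ x : ℝ, iteratedDeriv 2 (fun y => 1 / Real.sqrt (deriv η y)) x
        + (1 / 2) * schwarzian η x * (1 / Real.sqrt (deriv η x)) = 0) ∧
    (∀ x : ℝ, (η x / Real.sqrt (deriv η x))
          * deriv (fun y => 1 / Real.sqrt (deriv η y)) x
        - deriv (fun y => η y / Real.sqrt (deriv η y)) x
          * (1 / Real.sqrt (deriv η x)) = -1) := by
  have h2iter : ∀ F : ℝ → ℝ, iteratedDeriv 2 F = deriv (deriv F) := by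
    intro F
    rw [show (2:ℕ) = 1 + 1 from rfl, iteratedDeriv_succ, iteratedDeriv_one]
  set p := deriv η with hp
  set q := deriv p with hq
  set r := deriv q with hr
  have hp2 : ContDiff ℝ 2 p := by
    rw [hp]
    exact_mod_cast (contDiff_succ_iff_deriv.mp
      (by exact_mod_cast hη : ContDiff ℝ ((2:ℕ)+1) η)).2.2
  have hq1 : ContDiff ℝ 1 q := by
    rw [hq]
    exact_mod_cast (contDiff_succ_iff_deriv.mp
      (by exact_mod_cast hp2 : ContDiff ℝ ((1:ℕ)+1) p)).2.2
  have hdη : ∀ x, HasDerivAt η (p x) x := fun x =>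
    ((hη.differentiable (by norm_num)) x).hasDerivAt
  have hdp : ∀ x, HasDerivAt p (q x) x := fun x =>
    ((hp2.differentiable (by norm_num)) x).hasDerivAt
  have hdq : ∀ x, HasDerivAt q (r x) x := fun x =>
    ((hq1.differentiable (by norm_num)) x).hasDerivAt
  have hpne : ∀ x, p x ≠ 0 := fun x => (hpos x).ne'
  have hsne : ∀ x, Real.sqrt (p x) ≠ 0 := fun x => (Real.sqrt_pos.mpr (hpos x)).ne'
  have hs2 : ∀ x, Real.sqrt (p x) ^ 2 = p x := fun x => Real.sq_sqrt (hpos x).le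
  have hds : ∀ x, HasDerivAt (fun y => Real.sqrt (p y)) (q x / (2 * Real.sqrt (p x))) x :=
    fun x => (hdp x).sqrt (hpne x)
  have hds3 : ∀ x, HasDerivAt (fun y => 2 * Real.sqrt (p y) ^ 3)
      (3 * Real.sqrt (p x) * q x) x := by
    intro x
    have h := ((hds x).pow 3).const_mul 2
    refine h.congr_deriv (Eq.symm ?_)
    field_simp [hsne x]
    ring
  have hd3ne : ∀ x, 2 * Real.sqrt (p x) ^ 3 ≠ 0 := by
    intro x
    have := hsne x
    positivity
  have hi2 : iteratedDeriv 2 η = q := by rw [h2iter, ← hp, ← hq]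
  have hi3 : iteratedDeriv 3 η = r := by
    rw [show (3:ℕ) = 2 + 1 from rfl, iteratedDeriv_succ, hi2, ← hr]
  have hsch : ∀ x, schwarzian η x = r x / p x - (3/2) * (q x / p x) ^ 2 := by
    intro x
    simp only [schwarzian, hi2, hi3, ← hp]
  -- derivative of g = 1/√p
  have hdg : ∀ x, HasDerivAt (fun y => 1 / Real.sqrt (p y))
      (-(q x) / (2 * Real.sqrt (p x) ^ 3)) x := by
    intro x
    have h := (hasDerivAt_const x (1:ℝ)).div (hds x) (hsne x)
    refine h.congr_deriv (Eq.symm ?_)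
    field_simp [hsne x]
    ring
  have hdg2 : ∀ x, HasDerivAt (fun y => -(q y) / (2 * Real.sqrt (p y) ^ 3))
      ((-(r x) * (2 * Real.sqrt (p x) ^ 3) - -(q x) * (3 * Real.sqrt (p x) * q x))
        / (2 * Real.sqrt (p x) ^ 3) ^ 2) x :=
    fun x => ((hdq x).neg).div (hds3 x) (hd3ne x)
  -- derivative of f = η/√p
  have hdf : ∀ x, HasDerivAt (fun y => η y / Real.sqrt (p y))
      (Real.sqrt (p x) - η x * q x / (2 * Real.sqrt (p x) ^ 3)) x := by
    intro x
    have h := (hdη x).div (hds x) (hsne x)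
    refine h.congr_deriv (Eq.symm ?_)
    have hS0 := hsne x
    have hP := hs2 x
    set S := Real.sqrt (p x) with hS
    rw [← hP]
    field_simp [hS0]
  have hdf2 : ∀ x, HasDerivAt
      (fun y => Real.sqrt (p y) - η y * q y / (2 * Real.sqrt (p y) ^ 3))
      (q x / (2 * Real.sqrt (p x)) -
        ((p x * q x + η x * r x) * (2 * Real.sqrt (p x) ^ 3)
          - η x * q x * (3 * Real.sqrt (p x) * q x))
          / (2 * Real.sqrt (p x) ^ 3) ^ 2) x :=
    fun x => (hds x).sub (((hdη x).mul (hdq x)).div (hds3 x) (hd3ne x))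
  have hDg : deriv (fun y => 1 / Real.sqrt (p y))
      = fun y => -(q y) / (2 * Real.sqrt (p y) ^ 3) :=
    funext fun y => (hdg y).deriv
  have hDf : deriv (fun y => η y / Real.sqrt (p y))
      = fun y => Real.sqrt (p y) - η y * q y / (2 * Real.sqrt (p y) ^ 3) :=
    funext fun y => (hdf y).deriv
  refine ⟨fun x => ?_, fun x => ?_, fun x => ?_⟩
  · rw [h2iter, hDf, (hdf2 x).deriv, hsch]
    have hS0 := hsne x
    have hP := hs2 x
    set S := Real.sqrt (p x) with hS
    rw [← hP]
    field_simp [hS0]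
    ring
  · rw [h2iter, hDg, (hdg2 x).deriv, hsch]
    have hS0 := hsne x
    have hP := hs2 x
    set S := Real.sqrt (p x) with hS
    rw [← hP]
    field_simp [hS0]
    ring
  · rw [hDg, hDf]
    beta_reduce
    have hS0 := hsne x
    set S := Real.sqrt (p x) with hS
    field_simp [hS0]
    ring
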